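/- Let c ∈ ℝ, η ∈ ℝ with η ≠ 0, and let u, v : U → ℝ be smooth functions on an open set U ⊆ ℝ² satisfying u_{xt} = (u² + v² + c)v_x + u, v_{xt} = −(u² + v² + c)u_x + v on U. Define F₁₁ = −η√2·v_x, F₁₂ = (√2/η)u, F₂₁ = η², F₂₂ = −1/η² + u² + v² + c, F₃₁ = −η√2·u_x, F₃₂ = −(√2/η)v. Then on U the structure equations with δ = −1 hold: −∂_t F₁₁ + ∂_x F₁₂ = F₃₁F₂₂ − F₃₂F₂₁, −∂_t F₂₁ + ∂_x F₂₂ = F₁₁F₃₂ − F₁₂F₃₁, −∂_t F₃₁ + ∂_x F₃₂ = −(F₁₁F₂₂ − F₁₂F₂₁); hence this system describes spherical surfaces with these associated functions. -/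

import Mathlib

open Real

/-- Partial derivative in the `x` direction of a function on the `(x, t)` plane. -/
noncomputable def pdx (f : ℝ × ℝ → ℝ) (p : ℝ × ℝ) : ℝ := fderiv ℝ f p (1, 0)

/-- Partial derivative in the `t` direction of a function on the `(x, t)` plane. -/
noncomputable def pdt (f : ℝ × ℝ → ℝ) (p : ℝ × ℝ) : ℝ := fderiv ℝ f p (0, 1)

/-- The structure equations of a surface of constant Gaussian curvature `-δ`. -/
def StructEqs (δ : ℝ) (U : Set (ℝ × ℝ)) (F11 F12 F21 F22 F31 F32 : ℝ × ℝ → ℝ) : Prop :=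
  ∀ p ∈ U,
    -(pdt F11 p) + pdx F12 p = F31 p * F22 p - F32 p * F21 p ∧
    -(pdt F21 p) + pdx F22 p = F11 p * F32 p - F12 p * F31 p ∧
    -(pdt F31 p) + pdx F32 p = δ * (F11 p * F22 p - F12 p * F21 p)

lemma pdx_contDiffOn {f : ℝ × ℝ → ℝ} {U : Set (ℝ × ℝ)} (hU : IsOpen U)
    (hf : ContDiffOn ℝ (⊤ : ℕ∞) f U) : ContDiffOn ℝ (⊤ : ℕ∞) (pdx f) U :=
  (hf.fderiv_of_isOpen hU (by simp)).clm_apply contDiffOn_const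

lemma pdx_const_mul {f : ℝ × ℝ → ℝ} {p : ℝ × ℝ} (hf : DifferentiableAt ℝ f p) (a : ℝ) :
    pdx (fun q => a * f q) p = a * pdx f p := by
  simp [pdx, fderiv_const_mul hf a]

lemma pdt_const_mul {f : ℝ × ℝ → ℝ} {p : ℝ × ℝ} (hf : DifferentiableAt ℝ f p) (a : ℝ) :
    pdt (fun q => a * f q) p = a * pdt f p := by
  simp [pdt, fderiv_const_mul hf a]

/-- The system `u_xt = (u² + v² + c)v_x + u`, `v_xt = −(u² + v² + c)u_x + v`
describes spherical surfaces (`δ = −1`). -/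
theorem system_7mplrex2_describes_ss (c η : ℝ) (hη : η ≠ 0) (U : Set (ℝ × ℝ)) (hU : IsOpen U)
    (u v : ℝ × ℝ → ℝ)
    (hu : ContDiffOn ℝ (⊤ : ℕ∞) u U) (hv : ContDiffOn ℝ (⊤ : ℕ∞) v U)
    (heq1 : ∀ p ∈ U, pdt (pdx u) p = (u p ^ 2 + v p ^ 2 + c) * pdx v p + u p)
    (heq2 : ∀ p ∈ U, pdt (pdx v) p = -(u p ^ 2 + v p ^ 2 + c) * pdx u p + v p) :
    StructEqs (-1) U
      (fun q => -(η * Real.sqrt 2) * pdx v q)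
      (fun q => Real.sqrt 2 / η * u q)
      (fun _ => η ^ 2)
      (fun q => -(1 / η ^ 2) + u q ^ 2 + v q ^ 2 + c)
      (fun q => -(η * Real.sqrt 2) * pdx u q)
      (fun q => -(Real.sqrt 2 / η) * v q) := by
  intro p hp
  have hpn : U ∈ nhds p := hU.mem_nhds hp
  have hud : DifferentiableAt ℝ u p :=
    (hu.differentiableOn (by simp)).differentiableAt hpn
  have hvd : DifferentiableAt ℝ v p :=
    (hv.differentiableOn (by simp)).differentiableAt hpn
  have huxd : DifferentiableAt ℝ (pdx u) p :=
    ((pdx_contDiffOn hU hu).differentiableOn (by simp)).differentiableAt hpn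
  have hvxd : DifferentiableAt ℝ (pdx v) p :=
    ((pdx_contDiffOn hU hv).differentiableOn (by simp)).differentiableAt hpn
  -- derivative of u^2 and v^2
  have hu2 : HasFDerivAt (fun q => u q ^ 2) ((2 * u p) • fderiv ℝ u p) p := by
    have h := hud.hasFDerivAt.mul hud.hasFDerivAt
    have e : (fun q => u q ^ 2) = u * u := by funext q; simp [sq]
    rw [e, show (2 * u p) • fderiv ℝ u p = u p • fderiv ℝ u p + u p • fderiv ℝ u p by
      rw [two_mul, add_smul]]
    exact h
  have hv2 : HasFDerivAt (fun q => v q ^ 2) ((2 * v p) • fderiv ℝ v p) p := by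
    have h := hvd.hasFDerivAt.mul hvd.hasFDerivAt
    have e : (fun q => v q ^ 2) = v * v := by funext q; simp [sq]
    rw [e, show (2 * v p) • fderiv ℝ v p = v p • fderiv ℝ v p + v p • fderiv ℝ v p by
      rw [two_mul, add_smul]]
    exact h
  have hF22 : HasFDerivAt (fun q => -(1 / η ^ 2) + u q ^ 2 + v q ^ 2 + c)
      ((2 * u p) • fderiv ℝ u p + (2 * v p) • fderiv ℝ v p) p :=
    ((hu2.const_add _).add hv2).add_const c
  have hpdxF22 : pdx (fun q => -(1 / η ^ 2) + u q ^ 2 + v q ^ 2 + c) p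
      = 2 * u p * pdx u p + 2 * v p * pdx v p := by
    simp only [pdx]; rw [hF22.fderiv]; simp
  have hpdtF21 : pdt (fun _ : ℝ × ℝ => η ^ 2) p = 0 := by
    simp [pdt]
  have hs2 : Real.sqrt 2 * Real.sqrt 2 = 2 :=
    Real.mul_self_sqrt (by norm_num)
  refine ⟨?_, ?_, ?_⟩
  · rw [pdt_const_mul hvxd, pdx_const_mul hud, heq2 p hp]
    field_simp
    linear_combination (0:ℝ) * hs2
  · rw [hpdtF21, hpdxF22]
    field_simp
    linear_combination (-(pdx v p * v p + u p * pdx u p)) * hs2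
  · rw [pdt_const_mul huxd, pdx_const_mul hvd, heq1 p hp]
    field_simp
    linear_combination (0:ℝ) * hs2
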